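/- (λ-factorization, Appendix) Let N ≥ 2 and 1 ≤ k ≤ N. For each pair p < q in {1,…,N} let φ_{pq} : {0,1}×{0,1} → ℝ be given, and for a bit string J ∈ {0,1}^N set φ_J = Σ_{p<q} φ_{pq}(J_p, J_q). Fix t ∈ ℝ and bit strings x, y ∈ {0,1}^k, and define λ_{xy}(t) = Σ_{j ∈ {0,1}^{N−k}} exp(i·(φ_{x⌢j} − φ_{y⌢j})·t), where x⌢j denotes concatenation. Then |λ_{xy}(t)|² = 2^{2(N−k)} · Π_{b=k+1}^{N} cos²( (t/2)·Σ_{a=1}^{k} S_a·Φ_{ab} ), where S_a = y_a − x_a ∈ {−1,0,+1} and Φ_{ab} = φ_{ab}(0,1) + φ_{ab}(1,0) − φ_{ab}(0,0) − φ_{ab}(1,1) is the signed entangling phase of the pair (a,b). -/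

import Mathlib

open Real


lemma abs_two_exp (α β : ℝ) :
    ‖Complex.exp (Complex.I * α) + Complex.exp (Complex.I * β)‖ ^ 2
      = 4 * Real.cos ((α - β) / 2) ^ 2 := by
  rw [mul_comm Complex.I (α:ℂ), mul_comm Complex.I (β:ℂ)]
  rw [Complex.exp_mul_I, Complex.exp_mul_I]
  have h : (Complex.cos α + Complex.sin α * Complex.I) + (Complex.cos β + Complex.sin β * Complex.I)
      = ((Real.cos α + Real.cos β : ℝ) : ℂ) + ((Real.sin α + Real.sin β : ℝ) : ℂ) * Complex.I := by
    push_cast [Complex.ofReal_cos, Complex.ofReal_sin]; ring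
  rw [h, Complex.sq_norm, Complex.normSq_add_mul_I]
  have h2 := Real.cos_sq ((α - β) / 2)
  have h3 : 2 * ((α - β) / 2) = α - β := by ring
  rw [h3] at h2
  have h4 := Real.cos_sub α β
  nlinarith [Real.sin_sq_add_cos_sq α, Real.sin_sq_add_cos_sq β]

lemma two_sign (f : Fin 2 → Fin 2 → ℝ) (u v : Fin 2) :
    (f u 0 - f v 0) - (f u 1 - f v 1)
      = -((((v:ℕ):ℝ) - ((u:ℕ):ℝ)) * (f 0 1 + f 1 0 - f 0 0 - f 1 1)) := by
  fin_cases u <;> fin_cases v <;> simp <;> ring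


/-- (λ-factorization) Writing `N = k + m`, with total phases
`φ_J = Σ_{p<q} φ_{pq}(J_p, J_q)` for bit strings `J : Fin (k+m) → Fin 2`, the
quantity `λ_{xy}(t) = Σ_{j} exp(i(φ_{x⌢j} − φ_{y⌢j})t)` satisfies
`|λ_{xy}(t)|² = 2^{2(N−k)}·Π_b cos²((t/2)·Σ_a S_a Φ_{ab})`, where
`S_a = y_a − x_a` and `Φ_{ab}` is the signed entangling phase of pair (a,b). -/
theorem lambda_factorization (k m : ℕ) (hk : 1 ≤ k) (hN : 2 ≤ k + m)
    (φ : Fin (k + m) → Fin (k + m) → Fin 2 → Fin 2 → ℝ) (t : ℝ)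
    (x y : Fin k → Fin 2)
    (phiJ : (Fin (k + m) → Fin 2) → ℝ)
    (hphiJ : ∀ J, phiJ J = ∑ p, ∑ q, if p < q then φ p q (J p) (J q) else 0)
    (lam : ℂ)
    (hlam : lam = ∑ j : Fin m → Fin 2,
      Complex.exp (Complex.I *
        Complex.ofReal ((phiJ (Fin.append x j) - phiJ (Fin.append y j)) * t))) :
    ‖lam‖ ^ 2 = 2 ^ (2 * m) *
      ∏ b : Fin m,
        Real.cos ((t / 2) * ∑ a : Fin k,
          (((y a : ℕ) : ℝ) - ((x a : ℕ) : ℝ)) *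
            (φ (Fin.castAdd m a) (Fin.natAdd k b) 0 1 +
             φ (Fin.castAdd m a) (Fin.natAdd k b) 1 0 -
             φ (Fin.castAdd m a) (Fin.natAdd k b) 0 0 -
             φ (Fin.castAdd m a) (Fin.natAdd k b) 1 1)) ^ 2 := by
  set A : Fin k → Fin (k + m) := Fin.castAdd m with hA
  set B : Fin m → Fin (k + m) := Fin.natAdd k with hB
  set g : Fin m → Fin 2 → ℝ := fun b ε =>
    ∑ a, (φ (A a) (B b) (x a) ε - φ (A a) (B b) (y a) ε) with hg
  set C : ℝ :=
    (∑ a, ∑ a', if A a < A a' then φ (A a) (A a') (x a) (x a') else 0)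
    - (∑ a, ∑ a', if A a < A a' then φ (A a) (A a') (y a) (y a') else 0) with hC
  have h1 : ∀ (a : Fin k) (b : Fin m), A a < B b := by
    intro a b
    simp only [hA, hB, Fin.lt_def, Fin.coe_castAdd, Fin.coe_natAdd]
    have := a.isLt; omega
  have h2 : ∀ (a : Fin k) (b : Fin m), ¬ (B b < A a) := by
    intro a b
    simp only [hA, hB, Fin.lt_def, Fin.coe_castAdd, Fin.coe_natAdd]
    have := a.isLt; omega
  -- Step A: phase decomposition
  have hD : ∀ j : Fin m → Fin 2,
      phiJ (Fin.append x j) - phiJ (Fin.append y j) = C + ∑ b, g b (j b) := by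
    intro j
    rw [hphiJ, hphiJ]
    simp only [Fin.sum_univ_add]
    simp only [Fin.append_left, Fin.append_right]
    simp only [← hA, ← hB]
    simp only [h1, h2, if_true, if_false]
    have hgswap : ∑ b, g b (j b)
        = (∑ a, ∑ b, φ (A a) (B b) (x a) (j b))
          - (∑ a, ∑ b, φ (A a) (B b) (y a) (j b)) := by
      simp only [hg]
      rw [Finset.sum_comm, ← Finset.sum_sub_distrib]
      exact Finset.sum_congr rfl fun b _ => Finset.sum_sub_distrib _ _
    rw [hgswap, hC]
    simp only [Finset.sum_add_distrib]
    ring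
  -- Step B: factor lam
  have hlam2 : lam = Complex.exp (Complex.I * (C * t : ℝ)) *
      ∏ b : Fin m, ∑ ε : Fin 2, Complex.exp (Complex.I * ((g b ε * t : ℝ) : ℂ)) := by
    rw [hlam]
    rw [Fintype.prod_sum, Finset.mul_sum]
    refine Finset.sum_congr rfl fun j _ => ?_
    rw [hD j, ← Complex.exp_sum, ← Complex.exp_add]
    congr 1
    push_cast
    rw [add_mul, mul_add, Finset.sum_mul, Finset.mul_sum]
  rw [hlam2, norm_mul, mul_pow, Complex.norm_exp]
  have hre : (Complex.I * ((C * t : ℝ) : ℂ)).re = 0 := by simp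
  rw [hre, Real.exp_zero, one_pow, one_mul, norm_prod, ← Finset.prod_pow]
  have hper : ∀ b : Fin m,
      ‖∑ ε : Fin 2, Complex.exp (Complex.I * ((g b ε * t : ℝ) : ℂ))‖ ^ 2
        = 4 * Real.cos ((t / 2) * ∑ a : Fin k,
          (((y a : ℕ) : ℝ) - ((x a : ℕ) : ℝ)) *
            (φ (A a) (B b) 0 1 + φ (A a) (B b) 1 0
              - φ (A a) (B b) 0 0 - φ (A a) (B b) 1 1)) ^ 2 := by
    intro b
    rw [Fin.sum_univ_two, abs_two_exp]
    have hdiff : g b 0 - g b 1 = - ∑ a : Fin k,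
        (((y a : ℕ) : ℝ) - ((x a : ℕ) : ℝ)) *
          (φ (A a) (B b) 0 1 + φ (A a) (B b) 1 0
            - φ (A a) (B b) 0 0 - φ (A a) (B b) 1 1) := by
      simp only [hg, ← Finset.sum_sub_distrib, ← Finset.sum_neg_distrib]
      exact Finset.sum_congr rfl fun a _ => two_sign (fun u v => φ (A a) (B b) u v) (x a) (y a)
    have : (g b 0 * t - g b 1 * t) / 2 = - ((t / 2) * ∑ a : Fin k,
        (((y a : ℕ) : ℝ) - ((x a : ℕ) : ℝ)) *
          (φ (A a) (B b) 0 1 + φ (A a) (B b) 1 0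
            - φ (A a) (B b) 0 0 - φ (A a) (B b) 1 1)) := by
      rw [show g b 0 * t - g b 1 * t = (g b 0 - g b 1) * t by ring, hdiff]; ring
    rw [this, Real.cos_neg]
  calc (∏ b : Fin m,
      ‖∑ ε : Fin 2, Complex.exp (Complex.I * ((g b ε * t : ℝ) : ℂ))‖ ^ 2)
      = ∏ b : Fin m, 4 * Real.cos ((t / 2) * ∑ a : Fin k,
          (((y a : ℕ) : ℝ) - ((x a : ℕ) : ℝ)) *
            (φ (A a) (B b) 0 1 + φ (A a) (B b) 1 0
              - φ (A a) (B b) 0 0 - φ (A a) (B b) 1 1)) ^ 2 :=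
        Finset.prod_congr rfl fun b _ => hper b
    _ = 2 ^ (2 * m) * ∏ b : Fin m, Real.cos ((t / 2) * ∑ a : Fin k,
          (((y a : ℕ) : ℝ) - ((x a : ℕ) : ℝ)) *
            (φ (A a) (B b) 0 1 + φ (A a) (B b) 1 0
              - φ (A a) (B b) 0 0 - φ (A a) (B b) 1 1)) ^ 2 := by
        rw [Finset.prod_mul_distrib, Finset.prod_const, Finset.card_univ, Fintype.card_fin,
          pow_mul]
        norm_num
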